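/- arXiv:2209.04567 — 2 statements merged into one kernel-verified Lean document; each statement's English description precedes it below -/
import Mathlib

section
/- If a deterministic filter F is globally language comparable (GLC), then its compatibility graph G_F is chordal. -/
/-- A clique cover of a simple graph: a finite family of cliques covering every vertex. -/
def SimpleGraph.IsCliqueCover {V : Type} (G : SimpleGraph V) (K : Finset (Finset V)) : Prop :=
  (∀ s ∈ K, G.IsClique (s : Set V)) ∧ ∀ v : V, ∃ s ∈ K, v ∈ s

/-- The clique cover number: minimum number of cliques in a clique cover. -/
noncomputable def SimpleGraph.cliqueCoverNum {V : Type} (G : SimpleGraph V) : ℕ :=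
  sInf {n | ∃ K : Finset (Finset V), G.IsCliqueCover K ∧ K.card = n}

/-- The closed neighborhood of a vertex. -/
def SimpleGraph.closedNbhd {V : Type} (G : SimpleGraph V) (v : V) : Set V :=
  {w | w = v ∨ G.Adj v w}

/-- A graph is chordal if every cycle of length at least four has a chord:
an edge of the graph joining two vertices of the cycle that is not an edge of the cycle. -/
def SimpleGraph.Chordal {V : Type} (G : SimpleGraph V) : Prop :=
  ∀ (v : V) (c : G.Walk v v), c.IsCycle → 4 ≤ c.length →
    ∃ x y : V, G.Adj x y ∧ x ∈ c.support ∧ y ∈ c.support ∧ s(x, y) ∉ c.edges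

/-- A deterministic (combinatorial) filter: states `S`, observations `Y`, outputs `C`,
an initial state, a partial transition function and an output function. -/
structure DFilter (S Y C : Type) where
  init : S
  tr : S → Y → Option S
  out : S → C

namespace DFilter

variable {S Y C : Type}

/-- Trace an observation sequence from a state (`none` if it crashes). -/
def run (F : DFilter S Y C) : S → List Y → Option S
  | v, [] => some v
  | v, y :: ys => (F.tr v y).bind fun w => F.run w ys

/-- The extensions of a state: observation sequences traceable from it. -/
def Ext (F : DFilter S Y C) (v : S) : Set (List Y) :=
  {s | (F.run v s).isSome}

/-- The output sequence produced by tracing an observation sequence from a state,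
reading the output at every visited state (starting with the output of the state itself). -/
def outs (F : DFilter S Y C) : S → List Y → Option (List C)
  | v, [] => some [F.out v]
  | v, y :: ys => (F.tr v y).bind fun w => (F.outs w ys).map (F.out v :: ·)

/-- Two states are compatible when the outputs they produce agree on all common extensions. -/
def Compatible (F : DFilter S Y C) (v w : S) : Prop :=
  ∀ s : List Y, s ∈ F.Ext v → s ∈ F.Ext w → F.outs v s = F.outs w s

/-- The compatibility graph: edges join distinct compatible states. -/
def compatGraph (F : DFilter S Y C) : SimpleGraph S where
  Adj v w := v ≠ w ∧ F.Compatible v w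
  symm := ⟨by
    rintro v w ⟨hne, hc⟩
    exact ⟨hne.symm, fun s hw hv => (hc s hv hw).symm⟩⟩
  loopless := ⟨fun v h => h.1 rfl⟩

/-- A filter is globally language comparable (GLC) when the extension sets of any two
compatible states are comparable under inclusion. -/
def GLC (F : DFilter S Y C) : Prop :=
  ∀ v w : S, F.Compatible v w → F.Ext v ⊆ F.Ext w ∨ F.Ext w ⊆ F.Ext v

/-- A filter is neighborhood comparable (NC) when any two vertices of its compatibility
graph with intersecting closed neighborhoods have comparable closed neighborhoods. -/
def NC (F : DFilter S Y C) : Prop :=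
  ∀ v w : S, (F.compatGraph.closedNbhd v ∩ F.compatGraph.closedNbhd w).Nonempty →
    F.compatGraph.closedNbhd v ⊆ F.compatGraph.closedNbhd w ∨
      F.compatGraph.closedNbhd w ⊆ F.compatGraph.closedNbhd v

/-- The target set of the determinism-enforcing zipper constraint generated by a
set of states `U` and an observation `y`: all `y`-children of members of `U`. -/
def zipTarget (F : DFilter S Y C) (U : Set S) (y : Y) : Set S :=
  {w | ∃ u ∈ U, F.tr u y = some w}

/-- A set of mutually compatible states. -/
def MutuallyCompatible (F : DFilter S Y C) (U : Set S) : Prop :=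
  ∀ u ∈ U, ∀ u' ∈ U, F.Compatible u u'

end DFilter

-- Auxiliary lemmas

private lemma getVert_eq_support_getElem?' {V : Type} {G : SimpleGraph V} :
    ∀ {u v : V} (p : G.Walk u v) (i : ℕ), i ≤ p.length →
      p.support[i]? = some (p.getVert i) := by
  intro u v p
  induction p with
  | nil =>
    intro i hi
    have : i = 0 := Nat.le_zero.mp hi
    subst this; simp
  | cons h q ih =>
    intro i hi
    cases i with
    | zero => simp
    | succ n =>
      rw [SimpleGraph.Walk.support_cons, SimpleGraph.Walk.getVert_cons_succ]
      simpa using ih n (by simpa using hi)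

private lemma cycle_getVert_inj' {V : Type} {G : SimpleGraph V} {v : V} {c : G.Walk v v}
    (hc : c.IsCycle) {i j : ℕ} (hi1 : 1 ≤ i) (hi2 : i ≤ c.length)
    (hj1 : 1 ≤ j) (hj2 : j ≤ c.length) (h : c.getVert i = c.getVert j) : i = j := by
  have hnd := hc.support_nodup
  have hlen : c.support.tail.length = c.length := by
    have := c.length_support
    cases hs : c.support with
    | nil => simp [hs] at this
    | cons a l => simp [hs] at this ⊢; omega
  have key : ∀ k, 1 ≤ k → k ≤ c.length → c.support.tail[k-1]? = some (c.getVert k) := by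
    intro k hk1 hk2
    have := getVert_eq_support_getElem?' c k hk2
    cases hs : c.support with
    | nil => rw [hs] at this; simp at this
    | cons a l =>
      rw [hs] at this
      simp only [hs, List.tail_cons]
      rw [List.getElem?_cons] at this
      have : l[k-1]? = some (c.getVert k) := by
        rcases Nat.exists_eq_add_of_le hk1 with ⟨m, rfl⟩
        simpa [Nat.add_comm] using this
      exact this
  have h1 := key i hi1 hi2
  have h2 := key j hj1 hj2
  rw [h] at h1
  have := (List.getElem?_inj (by rw [hlen]; omega) hnd).mp (h1.trans h2.symm)
  omega

private lemma mem_edges_getVert' {V : Type} {G : SimpleGraph V} {x y : V} :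
    ∀ {u v : V} (p : G.Walk u v), s(x, y) ∈ p.edges →
      ∃ j < p.length, (p.getVert j = x ∧ p.getVert (j+1) = y) ∨
        (p.getVert j = y ∧ p.getVert (j+1) = x) := by
  intro u v p
  induction p with
  | nil => simp
  | cons h q ih =>
    intro hm
    rw [SimpleGraph.Walk.edges_cons, List.mem_cons] at hm
    rcases hm with hm | hm
    · refine ⟨0, by simp, ?_⟩
      rw [Sym2.eq_iff] at hm
      rcases hm with ⟨rfl, rfl⟩ | ⟨rfl, rfl⟩
      · exact Or.inl ⟨by simp, by simp [SimpleGraph.Walk.getVert_cons_succ]⟩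
      · exact Or.inr ⟨by simp, by simp [SimpleGraph.Walk.getVert_cons_succ]⟩
    · obtain ⟨j, hj, hor⟩ := ih hm
      exact ⟨j+1, by simp; omega, by simpa [SimpleGraph.Walk.getVert_cons_succ] using hor⟩

private lemma compat_of_mid' {S Y C : Type} (F : DFilter S Y C) {a m b : S}
    (ham : F.Compatible a m) (hmb : F.Compatible m b)
    (ha : F.Ext a ⊆ F.Ext m) (hb : F.Ext b ⊆ F.Ext m) : F.Compatible a b :=
  fun s hsa hsb => (ham s hsa (ha hsa)).trans (hmb s (hb hsb) hsb)

/-- The compatibility graph of a globally language comparable filter is chordal. -/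
theorem compatGraph_chordal_of_glc {S Y C : Type} (F : DFilter S Y C) (hglc : F.GLC) :
    F.compatGraph.Chordal := by
  classical
  intro v c hc hlen
  set n := c.length with hn
  -- choose an index with maximal extension set
  obtain ⟨i, hi1, hi2, hmax⟩ :
      ∃ i, 1 ≤ i ∧ i ≤ n ∧ ∀ j, 1 ≤ j → j ≤ n →
        ¬ F.Ext (c.getVert i) ⊂ F.Ext (c.getVert j) := by
    obtain ⟨E, hE, hEmax⟩ :=
      ((Finset.Icc 1 n).image (fun k => F.Ext (c.getVert k))).exists_maximal
        (Finset.image_nonempty.mpr ⟨1, Finset.mem_Icc.mpr ⟨le_refl 1, by omega⟩⟩)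
    obtain ⟨i, hi, rfl⟩ := Finset.mem_image.mp hE
    exact ⟨i, (Finset.mem_Icc.mp hi).1, (Finset.mem_Icc.mp hi).2, fun j hj1 hj2 hlt =>
      hlt.not_subset (hEmax (Finset.mem_image_of_mem _ (Finset.mem_Icc.mpr ⟨hj1, hj2⟩)) hlt.subset)⟩
  have hv0 : c.getVert n = c.getVert 0 := by
    rw [hn, SimpleGraph.Walk.getVert_length, SimpleGraph.Walk.getVert_zero]
  set ra := if i = 1 then n else i - 1 with hra_def
  set rb := if i = n then 1 else i + 1 with hrb_def
  set a := c.getVert ra with ha_def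
  set m := c.getVert i with hm_def
  set b := c.getVert rb with hb_def
  have hra1 : 1 ≤ ra := by rw [hra_def]; split <;> omega
  have hra2 : ra ≤ n := by rw [hra_def]; split <;> omega
  have hrb1 : 1 ≤ rb := by rw [hrb_def]; split <;> omega
  have hrb2 : rb ≤ n := by rw [hrb_def]; split <;> omega
  have ha_eq : a = c.getVert (i - 1) := by
    rw [ha_def, hra_def]
    split
    · rename_i h; rw [h]; simpa using hv0
    · rfl
  have hadj_am : F.compatGraph.Adj a m := by
    rw [ha_eq, hm_def]
    have := c.adj_getVert_succ (i := i - 1) (by omega)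
    rwa [show i - 1 + 1 = i by omega] at this
  have hadj_mb : F.compatGraph.Adj m b := by
    rw [hm_def, hb_def, hrb_def]
    split
    · rename_i h
      rw [h, hv0]
      exact c.adj_getVert_succ (i := 0) (by omega)
    · exact c.adj_getVert_succ (by omega)
  -- maximality gives inclusion of extension sets
  have hsub : ∀ x : S, F.Compatible m x →
      (∀ (h : F.Ext m ⊆ F.Ext x), F.Ext x ⊆ F.Ext m) → True := fun _ _ _ => trivial
  have hExt : ∀ r, 1 ≤ r → r ≤ n → F.Compatible m (c.getVert r) →
      F.Ext (c.getVert r) ⊆ F.Ext m := by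
    intro r hr1 hr2 hcompat
    rcases hglc m (c.getVert r) hcompat with h | h
    · by_cases h2 : F.Ext (c.getVert r) ⊆ F.Ext m
      · exact h2
      · exact absurd ⟨h, h2⟩ (hmax r hr1 hr2)
    · exact h
  have hExta : F.Ext a ⊆ F.Ext m := hExt ra hra1 hra2 (hadj_am.symm.2)
  have hExtb : F.Ext b ⊆ F.Ext m := hExt rb hrb1 hrb2 (hadj_mb.2)
  have hne : a ≠ b := by
    intro h
    have := cycle_getVert_inj' hc hra1 hra2 hrb1 hrb2 (by rw [← ha_def, ← hb_def, h])
    rw [hra_def, hrb_def] at this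
    split at this <;> split at this <;> omega
  have hadj_ab : F.compatGraph.Adj a b :=
    ⟨hne, compat_of_mid' F hadj_am.2 hadj_mb.2 hExta hExtb⟩
  refine ⟨a, b, hadj_ab, ?_, ?_, ?_⟩
  · exact SimpleGraph.Walk.mem_support_iff_exists_getVert.mpr ⟨ra, rfl, by omega⟩
  · exact SimpleGraph.Walk.mem_support_iff_exists_getVert.mpr ⟨rb, rfl, by omega⟩
  · intro hmem
    obtain ⟨j, hj, hor⟩ := mem_edges_getVert' c hmem
    rw [← hn] at hj
    have hrj1 : 1 ≤ (if j = 0 then n else j) := by split <;> omega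
    have hrj2 : (if j = 0 then n else j) ≤ n := by split <;> omega
    have hj_eq : c.getVert (if j = 0 then n else j) = c.getVert j := by
      split
      · rename_i h; rw [h]; exact hv0
      · rfl
    rcases hor with ⟨h1, h2⟩ | ⟨h1, h2⟩
    · have e1 : (if j = 0 then n else j) = ra :=
        cycle_getVert_inj' hc hrj1 hrj2 hra1 hra2 (by rw [hj_eq, h1, ha_def])
      have e2 : j + 1 = rb :=
        cycle_getVert_inj' hc (by omega) (by omega) hrb1 hrb2 (by rw [h2, hb_def])
      rw [hra_def] at e1; rw [hrb_def] at e2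
      split at e1 <;> split at e2 <;> split at e1 <;> omega
    · have e1 : (if j = 0 then n else j) = rb :=
        cycle_getVert_inj' hc hrj1 hrj2 hrb1 hrb2 (by rw [hj_eq, h1, hb_def])
      have e2 : j + 1 = ra :=
        cycle_getVert_inj' hc (by omega) (by omega) hra1 hra2 (by rw [h2, ha_def])
      rw [hrb_def] at e1; rw [hra_def] at e2
      split at e1 <;> split at e2 <;> split at e1 <;> omega
end

section
/- If a deterministic filter F is neighborhood comparable (NC), then its compatibility graph G_F is chordal; indeed G_F is a disjoint union of complete graphs. -/
/-- In a path of length at least two, the edge joining the two endpoints (if it exists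
in the graph) is not an edge of the path. -/
lemma endpoints_edge_not_mem {V : Type} {G : SimpleGraph V} {a b : V} (q : G.Walk a b)
    (hq : q.IsPath) (hl : 2 ≤ q.length) : s(a, b) ∉ q.edges := by
  cases q with
  | nil => simp at hl
  | cons h r =>
    rename_i c
    intro hmem
    rw [SimpleGraph.Walk.edges_cons, List.mem_cons] at hmem
    rw [SimpleGraph.Walk.cons_isPath_iff] at hq
    rcases hmem with heq | hmem
    · rw [Sym2.eq_iff] at heq
      rcases heq with ⟨-, hbc⟩ | ⟨hac, -⟩
      · subst hbc
        have : r = SimpleGraph.Walk.nil := SimpleGraph.Walk.isPath_iff_eq_nil.mp hq.1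
        subst this
        simp at hl
      · exact h.ne hac
    · exact hq.2 (SimpleGraph.Walk.fst_mem_support_of_mem_edges r hmem)

/-- The compatibility graph of a neighborhood comparable filter is chordal; indeed it is a
disjoint union of complete graphs (the relation "equal or adjacent" is transitive). -/
theorem compatGraph_chordal_of_nc {S Y C : Type} (F : DFilter S Y C) (hnc : F.NC) :
    F.compatGraph.Chordal ∧
      Transitive fun v w : S => v = w ∨ F.compatGraph.Adj v w := by
  have htrans : Transitive fun v w : S => v = w ∨ F.compatGraph.Adj v w := by
    intro a b c hab hbc
    rcases hab with rfl | hab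
    · exact hbc
    rcases hbc with rfl | hbc
    · exact Or.inr hab
    by_cases hac : a = c
    · exact Or.inl hac
    have hbmem : b ∈ F.compatGraph.closedNbhd a ∩ F.compatGraph.closedNbhd c :=
      ⟨Or.inr hab, Or.inr hbc.symm⟩
    rcases hnc a c ⟨b, hbmem⟩ with hsub | hsub
    · have : a ∈ F.compatGraph.closedNbhd c := hsub (Or.inl rfl)
      rcases this with h | h
      · exact Or.inl h
      · exact Or.inr h.symm
    · have : c ∈ F.compatGraph.closedNbhd a := hsub (Or.inl rfl)
      rcases this with h | h
      · exact Or.inl h.symm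
      · exact Or.inr h
  refine ⟨?_, htrans⟩
  intro v c hc hlen
  cases c with
  | nil => simp at hlen
  | cons h p =>
    rename_i w
    cases p with
    | nil => simp at hlen
    | cons h' q =>
      rename_i x
      -- h : Adj v w, h' : Adj w x, q : Walk x v
      have hql : 2 ≤ q.length := by
        simp only [SimpleGraph.Walk.length_cons] at hlen
        omega
      have hsupt : (SimpleGraph.Walk.cons h' q).support.Nodup := hc.2
      rw [SimpleGraph.Walk.support_cons, List.nodup_cons] at hsupt
      have hqpath : q.IsPath := SimpleGraph.Walk.IsPath.mk' hsupt.2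
      have hvx : v ≠ x := by
        intro hvx
        subst hvx
        have : q = SimpleGraph.Walk.nil := SimpleGraph.Walk.isPath_iff_eq_nil.mp hqpath
        subst this
        simp at hql
      have hadj : F.compatGraph.Adj v x := by
        rcases htrans (Or.inr h) (Or.inr h') with heq | hadj
        · exact absurd heq hvx
        · exact hadj
      refine ⟨v, x, hadj, ?_, ?_, ?_⟩
      · exact SimpleGraph.Walk.start_mem_support _
      · rw [SimpleGraph.Walk.support_cons, SimpleGraph.Walk.support_cons]
        exact List.mem_cons_of_mem _ (List.mem_cons_of_mem _ q.start_mem_support)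
      · intro hmem
        rw [SimpleGraph.Walk.edges_cons, SimpleGraph.Walk.edges_cons,
          List.mem_cons, List.mem_cons] at hmem
        rcases hmem with heq | heq | hmem
        · rw [Sym2.eq_iff] at heq
          rcases heq with ⟨-, hxw⟩ | ⟨hvw, -⟩
          · exact hsupt.1 (hxw ▸ q.start_mem_support)
          · exact h.ne hvw
        · rw [Sym2.eq_iff] at heq
          rcases heq with ⟨hvw, -⟩ | ⟨hvx', -⟩
          · exact h.ne hvw
          · exact hvx hvx'
        · exact endpoints_edge_not_mem q hqpath hql (Sym2.eq_swap ▸ hmem)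
end
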